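/- Let q be a power of a prime p and t a positive integer with m = pt. In the field F_{q^m}, let x_1,...,x_{q^t} be the roots of L(x) = x^{q^t} - x^{q^t-1} + 1 (which splits with distinct roots in F_{q^m}). Then for every j, the quantity S_j = (∏_{k≠j}(1 - x_k)) / (x_j · ∏_{k≠j}(x_j - x_k)) equals 1. -/

import Mathlib

open Polynomial Finset

theorem stmt_15 (p e t q : ℕ) (hp : p.Prime) (he : 0 < e) (ht : 0 < t)
    (hq : q = p ^ e)
    (E : Type) [Field E] [Fintype E] (hE : Fintype.card E = q ^ (p * t))
    (x : Fin (q ^ t) → E) (hinj : Function.Injective x)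
    (hroot : ∀ j, x j ^ (q ^ t) - x j ^ (q ^ t - 1) + 1 = 0) :
    ∀ j, (∏ k ∈ Finset.univ.erase j, (1 - x k)) /
        (x j * ∏ k ∈ Finset.univ.erase j, (x j - x k)) = 1 := by
  intro j
  have hq2 : 2 ≤ q := by
    subst hq
    calc 2 ≤ p := hp.two_le
    _ ≤ p ^ e := Nat.le_self_pow he.ne' p
  obtain ⟨n, hn⟩ : ∃ n, q ^ t = n := ⟨q ^ t, rfl⟩
  have hn2 : 2 ≤ n := hn ▸ le_trans hq2 (Nat.le_self_pow ht.ne' q)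
  -- characteristic
  have hpE : (p : E) = 0 := by
    obtain ⟨m, hcprime, hcard⟩ := FiniteField.card E (ringChar E)
    have heq : p ^ (e * (p * t)) = ringChar E ^ (m : ℕ) := by
      rw [← hcard, hE, hq, ← pow_mul]
    have hdvd : p ∣ ringChar E ^ (m : ℕ) := by
      rw [← heq]
      exact dvd_pow_self p (Nat.mul_ne_zero he.ne' (Nat.mul_ne_zero hp.pos.ne' ht.ne'))
    have hpc : p = ringChar E :=
      (Nat.prime_dvd_prime_iff_eq hp hcprime).mp (hp.dvd_of_dvd_pow hdvd)
    haveI := ringChar.charP E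
    rw [hpc]
    exact CharP.cast_eq_zero E (ringChar E)
  have hnE : (n : E) = 0 := by
    rw [← hn, hq, ← pow_mul, Nat.cast_pow, hpE,
      zero_pow (Nat.mul_ne_zero he.ne' ht.ne')]
  have hroot' : ∀ k, x k ^ n - x k ^ (n - 1) + 1 = 0 := fun k => hn ▸ hroot k
  -- the polynomial
  set M : E[X] := X ^ n - X ^ (n - 1) + C 1 with hM
  have hMmonic : M.Monic := by
    rw [hM]
    monicity!
    have h1 : n ≠ n - 1 := by omega
    have h2 : n ≠ 0 := by omega
    simp [h1, h2]
  have hMdeg : M.natDegree = n := by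
    rw [hM]
    compute_degree!
    have h1 : n ≠ n - 1 := by omega
    have h2 : n ≠ 0 := by omega
    simp [h1, h2]
  -- the roots of M are exactly the x k
  have hroots : (Finset.univ.val.map x) = M.roots := by
    apply Multiset.eq_of_le_of_card_le
    · rw [Multiset.le_iff_subset (Finset.univ.nodup.map hinj)]
      intro a ha
      obtain ⟨k, -, rfl⟩ := Multiset.mem_map.mp ha
      rw [Polynomial.mem_roots hMmonic.ne_zero]
      show Polynomial.eval (x k) M = 0
      simpa [hM] using hroot' k
    · calc M.roots.card ≤ M.natDegree := M.card_roots'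
        _ = n := hMdeg
        _ = (Finset.univ.val.map x).card := by simp [hn]
  have hnodal : Lagrange.nodal Finset.univ x = M := by
    have hcard : M.roots.card = M.natDegree := by
      rw [← hroots, hMdeg]; simp [hn]
    have hprod := Polynomial.prod_multiset_X_sub_C_of_monic_of_roots_card_eq hMmonic hcard
    rw [← hroots, Multiset.map_map] at hprod
    rw [Lagrange.nodal, Finset.prod_eq_multiset_prod]
    exact hprod
  -- product of (1 - x k) over all k is 1
  have h1 : ∏ k, ((1 : E) - x k) = 1 := by
    have h := congrArg (Polynomial.eval 1) hnodal
    rw [Lagrange.eval_nodal] at h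
    simpa [hM] using h
  -- product over erase is a power of x j
  have hn1E : ((n - 1 : ℕ) : E) = -1 := by
    rw [Nat.cast_sub (by omega : 1 ≤ n), hnE]
    ring
  have hD : ∏ k ∈ Finset.univ.erase j, (x j - x k) = x j ^ (n - 2) := by
    have h := congrArg (fun P => Polynomial.eval (x j) (Polynomial.derivative P)) hnodal
    rw [Lagrange.eval_nodal_derivative_eval_node_eq (Finset.mem_univ j),
      Lagrange.eval_nodal] at h
    rw [h, hM]
    simp [Polynomial.derivative_X_pow, hnE, hn1E]
    rw [show n - 1 - 1 = n - 2 from by omega]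
  -- nonvanishing
  have hx0 : x j ≠ 0 := by
    intro h
    have hr := hroot' j
    rw [h, zero_pow (by omega : n ≠ 0), zero_pow (by omega : n - 1 ≠ 0)] at hr
    simp at hr
  have hx1 : (1 : E) - x j ≠ 0 := by
    intro h
    have hxj : x j = 1 := by rw [sub_eq_zero] at h; exact h.symm
    have hr := hroot' j
    rw [hxj] at hr
    simp at hr
  have hpow1 : x j * x j ^ (n - 2) = x j ^ (n - 1) := by
    rw [← pow_succ', show n - 2 + 1 = n - 1 from by omega]
  have hden : x j * ∏ k ∈ Finset.univ.erase j, (x j - x k) ≠ 0 := by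
    rw [hD, hpow1]
    exact pow_ne_zero _ hx0
  rw [div_eq_one_iff_eq hden]
  apply mul_left_cancel₀ hx1
  rw [Finset.mul_prod_erase Finset.univ (fun k => 1 - x k) (Finset.mem_univ j), h1,
    hD, hpow1, sub_mul, one_mul, ← pow_succ', show n - 1 + 1 = n by omega]
  linear_combination hroot' j
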